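/- The function R_2(t) = \frac{1}{2}\sqrt{\frac{(1+4t)e^{4t} - (2+4t+12t^2+8t^3)e^{2t} + 1}{t^2((2t+1)e^{2t}-1)^2}} satisfies R_2(t) = \frac{1}{2t^{3/2}} + O(t^{-2}) as t \to \infty. -/

import Mathlib

open Filter Asymptotics

noncomputable def R2 (t : ℝ) : ℝ :=
  (1 / 2) * Real.sqrt
    (((1 + 4 * t) * Real.exp (4 * t)
        - (2 + 4 * t + 12 * t ^ 2 + 8 * t ^ 3) * Real.exp (2 * t) + 1) /
      (t ^ 2 * ((2 * t + 1) * Real.exp (2 * t) - 1) ^ 2))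

lemma sqrt_sub_one_le (u : ℝ) (hu : 0 ≤ u) : |Real.sqrt u - 1| ≤ |u - 1| := by
  have hs : Real.sqrt u ^ 2 = u := Real.sq_sqrt hu
  have h0 := Real.sqrt_nonneg u
  have h : u - 1 = (Real.sqrt u - 1) * (Real.sqrt u + 1) := by nlinarith
  rw [h, abs_mul]
  have h1 : (1:ℝ) ≤ |Real.sqrt u + 1| := by
    rw [abs_of_nonneg (by linarith)]; linarith
  exact le_mul_of_one_le_right (abs_nonneg _) h1

set_option maxHeartbeats 1000000 in
theorem stmt12 :
    (fun t : ℝ => R2 t - 1 / (2 * t ^ ((3 : ℝ) / 2)))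
      =O[atTop] fun t : ℝ => t ^ (-(2 : ℝ)) := by
  rw [isBigO_iff]
  refine ⟨1, ?_⟩
  filter_upwards [eventually_ge_atTop (30:ℝ)] with t ht
  have ht0 : (0:ℝ) < t := by linarith
  set E := Real.exp (2 * t) with hEdef
  have hE0 : 0 < E := Real.exp_pos _
  have hE1 : (1:ℝ) ≤ E := Real.one_le_exp (by linarith)
  have hEt : t ≤ E := by
    have := Real.add_one_le_exp (2 * t); rw [← hEdef] at this; linarith
  -- E ≥ 32 t^5 / 3125
  have hE5 : 32 * t ^ 5 / 3125 ≤ E := by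
    have h1 : 2 * t / 5 ≤ Real.exp (2 * t / 5) := by
      have := Real.add_one_le_exp (2 * t / 5); linarith
    have h2 : (2 * t / 5) ^ 5 ≤ Real.exp (2 * t / 5) ^ 5 :=
      pow_le_pow_left₀ (by linarith) h1 5
    have h3 : Real.exp (2 * t / 5) ^ 5 = E := by
      rw [hEdef, ← Real.exp_nat_mul]; congr 1; push_cast; ring
    calc 32 * t ^ 5 / 3125 = (2 * t / 5) ^ 5 := by ring
      _ ≤ E := by rw [← h3]; exact h2
  set A : ℝ := (2 * t + 1) * E - 1 with hAdef
  have hA2 : 2 * t * E ≤ A := by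
    have h : 2 * t * E + (E - 1) = A := by rw [hAdef]; ring
    nlinarith
  have hA0 : 0 < A := by nlinarith
  set N : ℝ := (1 + 4 * t) * E ^ 2 - (2 + 4 * t + 12 * t ^ 2 + 8 * t ^ 3) * E + 1
    with hNdef
  -- power comparisons
  have hp1 : t ≤ t ^ 5 := by nlinarith [pow_nonneg ht0.le 3, pow_nonneg ht0.le 4]
  have hp3 : t ^ 3 ≤ t ^ 5 := by nlinarith [pow_nonneg ht0.le 3]
  have hp4 : t ^ 4 ≤ t ^ 5 := by nlinarith [pow_nonneg ht0.le 4]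
  have hp0 : (1:ℝ) ≤ t ^ 5 := by nlinarith [hp1]
  have hpoly : 8 * t ^ 5 + 12 * t ^ 4 + 4 * t ^ 3 + 6 * t + 4 ≤ 46 * t ^ 5 := by
    linarith
  have hq : 46 * t ^ 5 ≤ 5 * t ^ 2 * E := by
    have h1 : 5 * t ^ 2 * (32 * t ^ 5 / 3125) ≤ 5 * t ^ 2 * E :=
      mul_le_mul_of_nonneg_left hE5 (by positivity)
    have h2 : (0:ℝ) ≤ (t ^ 2 - 900) * t ^ 5 :=
      mul_nonneg (by nlinarith) (pow_nonneg ht0.le 5)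
    nlinarith
  have key1 : (8 * t ^ 5 + 12 * t ^ 4 + 4 * t ^ 3 + 6 * t + 4) * E
      ≤ 5 * t ^ 2 * E ^ 2 := by
    have h1 : (8 * t ^ 5 + 12 * t ^ 4 + 4 * t ^ 3 + 6 * t + 4) * E
        ≤ (5 * t ^ 2 * E) * E :=
      mul_le_mul_of_nonneg_right (hpoly.trans hq) hE0.le
    nlinarith
  -- key polynomial inequalities
  have hlow : (t - 2) * A ^ 2 ≤ t ^ 2 * N := by
    rw [hAdef, hNdef]
    nlinarith [key1, mul_nonneg (by linarith : (0:ℝ) ≤ 7 * t + 2) (sq_nonneg E),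
      mul_nonneg (mul_nonneg ht0.le ht0.le) hE0.le]
  have hup : t ^ 2 * N ≤ (t + 2) * A ^ 2 := by
    rw [hAdef, hNdef]
    have hEE : E * 1 ≤ E * E := mul_le_mul_of_nonneg_left hE1 hE0.le
    have htt : t * t ≤ E * E := mul_le_mul hEt hEt ht0.le hE0.le
    have h1 : (2 * t ^ 2 + 10 * t + 4) * E ≤ (2 * t ^ 2 + 10 * t + 4) * (E * E) :=
      mul_le_mul_of_nonneg_left (by nlinarith) (by positivity)
    nlinarith [sq_nonneg E, mul_nonneg ht0.le (sq_nonneg E)]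
  set u : ℝ := t * N / A ^ 2 with hudef
  have hA2pos : (0:ℝ) < A ^ 2 := by positivity
  have hdiff : u - 1 = (t * N - A ^ 2) / A ^ 2 := by
    rw [hudef]; field_simp
  have habs : |u - 1| ≤ 2 / t := by
    rw [hdiff, abs_div, abs_of_pos hA2pos, div_le_div_iff₀ hA2pos ht0]
    have hb : |t * N - A ^ 2| * t = |t * (t * N - A ^ 2)| := by
      rw [abs_mul, abs_of_pos ht0]; ring
    rw [hb]
    rw [abs_le]
    constructor
    · nlinarith
    · nlinarith
  have hu0 : 0 ≤ u := by
    have h := abs_le.mp habs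
    have h2t : 2 / t ≤ 1 := by
      rw [div_le_one ht0]; linarith
    linarith [h.1]
  -- rewrite R2
  have hE4 : Real.exp (4 * t) = E ^ 2 := by
    rw [show (4:ℝ) * t = 2 * t + 2 * t by ring, Real.exp_add, hEdef]; ring
  have hR : R2 t = 1 / 2 * Real.sqrt (u / t ^ 3) := by
    rw [R2, hE4, ← hEdef]
    congr 2
    rw [hudef, hNdef, hAdef]
    have hAne : (2 * t + 1) * E - 1 ≠ 0 := hA0.ne'
    field_simp
  set S := Real.sqrt (t ^ 3) with hSdef
  have hS0 : 0 < S := Real.sqrt_pos.mpr (by positivity)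
  have hSt : t ≤ S := by
    rw [hSdef, show t ^ 3 = t ^ 2 * t by ring, Real.sqrt_mul (sq_nonneg t),
      Real.sqrt_sq ht0.le]
    nlinarith [Real.one_le_sqrt.mpr (show (1:ℝ) ≤ t by linarith)]
  have hrpow : t ^ ((3:ℝ) / 2) = S := by
    rw [hSdef, Real.sqrt_eq_rpow, ← Real.rpow_natCast t 3, ← Real.rpow_mul ht0.le]
    norm_num
  have hsplit : Real.sqrt (u / t ^ 3) = Real.sqrt u / S := by
    rw [Real.sqrt_div hu0, hSdef]
  have hneg2 : t ^ (-(2:ℝ)) = (t ^ 2)⁻¹ := by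
    rw [Real.rpow_neg ht0.le, show ((2:ℝ)) = ((2:ℕ):ℝ) by norm_num,
      Real.rpow_natCast]
  have hsq : |Real.sqrt u - 1| ≤ 2 / t := le_trans (sqrt_sub_one_le u hu0) habs
  have heq : R2 t - 1 / (2 * t ^ ((3:ℝ) / 2)) = (Real.sqrt u - 1) / (2 * S) := by
    rw [hR, hsplit, hrpow]
    field_simp
  have key : |R2 t - 1 / (2 * t ^ ((3:ℝ) / 2))| ≤ (t ^ 2)⁻¹ := by
    rw [heq, abs_div, abs_of_pos (by linarith : (0:ℝ) < 2 * S),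
      div_le_iff₀ (by linarith : (0:ℝ) < 2 * S)]
    calc |Real.sqrt u - 1| ≤ 2 / t := hsq
      _ ≤ (t ^ 2)⁻¹ * (2 * S) := by
          rw [div_le_iff₀ ht0]
          have h4 : (t ^ 2)⁻¹ * (2 * S) * t = 2 * S / t := by
            field_simp
          rw [h4, le_div_iff₀ ht0]
          linarith
  simpa [Real.norm_eq_abs, hneg2, abs_of_pos (show (0:ℝ) < (t ^ 2)⁻¹ by positivity)]
    using key
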